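/- Let r ≥ 2, s ≥ 3, and n, m ≥ 1. For every m̂ ≥ 2 and every partition m = m₁ + ⋯ + m_{m̂} into positive parts, there exist nonnegative integers n̂, ň₁, …, ň_{m̂} with n = n̂ + ň₁ + ⋯ + ň_{m̂} such that: if m̂ = 2 then PERM_{r,s}(n,m) ≤ PERM_{r,s}(ň₁,m₁) + PERM_{r,s}(ň₂,m₂) + PERM_{r,s−1}(2n̂, m), and if m̂ > 2 then PERM_{r,s}(n,m) ≤ Σ_{q=1}^{m̂} PERM_{r,s}(ňq, mq) + 2·PERM_{r,s−1}(n̂, m) + PERM_{r,s−2}(PERM_{r,s}(n̂, m̂) − 2n̂, m). -/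

import Mathlib

/-! ## Basic definitions for generalized Davenport-Schinzel sequences -/

/-- `σ` is contained in `S`: `S` has a subsequence equal to `σ`
after an injective renaming of symbols. -/
def SeqContains (σ S : List ℕ) : Prop :=
  ∃ f : ℕ → ℕ, (∀ a ∈ σ, ∀ b ∈ σ, f a = f b → a = b) ∧ (σ.map f).Sublist S

/-- `S` avoids every member of the family `P`. -/
def FamFree (P : Set (List ℕ)) (S : List ℕ) : Prop := ∀ σ ∈ P, ¬ SeqContains σ S

/-- `S` is `k`-sparse: equal entries are at least `k` positions apart. -/
def Sparse (k : ℕ) (S : List ℕ) : Prop :=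
  ∀ i j : Fin S.length, (i : ℕ) < (j : ℕ) → S.get i = S.get j → (i : ℕ) + k ≤ (j : ℕ)

/-- `S` is a concatenation of at most `m` blocks (sequences of distinct symbols). -/
def BlockPartition (S : List ℕ) (m : ℕ) : Prop :=
  ∃ Bs : List (List ℕ), Bs.length ≤ m ∧ (∀ B ∈ Bs, B.Nodup) ∧ S = Bs.flatten

/-- `Ex(P, n)` for `r`-sparse sequences: maximum length of an `r`-sparse `P`-free sequence
over an alphabet of at most `n` symbols. -/
noncomputable def ExS (P : Set (List ℕ)) (r n : ℕ) : ℕ :=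
  sSup {L : ℕ | ∃ S : List ℕ, FamFree P S ∧ S.toFinset.card ≤ n ∧ Sparse r S ∧ S.length = L}

/-- `Ex(P, n, m)`: maximum length of a `P`-free sequence over an alphabet of at most `n`
symbols partitioned into at most `m` blocks. -/
noncomputable def ExB (P : Set (List ℕ)) (n m : ℕ) : ℕ :=
  sSup {L : ℕ | ∃ S : List ℕ, FamFree P S ∧ S.toFinset.card ≤ n ∧ BlockPartition S m ∧ S.length = L}

/-- `Ex(σ, n)` for a single forbidden sequence `σ`, with the `‖σ‖`-sparseness convention. -/
noncomputable def ExSeq (σ : List ℕ) (n : ℕ) : ℕ := ExS {σ} σ.toFinset.card n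

/-- `Ex(σ, n, m)` for a single forbidden sequence `σ`. -/
noncomputable def ExSeqB (σ : List ℕ) (n m : ℕ) : ℕ := ExB {σ} n m

/-- `B` is a permutation of `{1, …, r}` listed as a sequence. -/
def IsPermBlock (r : ℕ) (B : List ℕ) : Prop :=
  B.Nodup ∧ B.toFinset = Finset.Icc 1 r

/-- `B` contains exactly two occurrences of each symbol of `{1, …, r}` and nothing else. -/
def IsDoubleBlock (r : ℕ) (B : List ℕ) : Prop :=
  ∀ a : ℕ, B.count a = if a ∈ Finset.Icc 1 r then 2 else 0

/-- `Perm_{r,k}`: all concatenations of `k` permutations of `{1, …, r}`. -/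
def PermFam (r k : ℕ) : Set (List ℕ) :=
  {S | ∃ Bs : List (List ℕ), Bs.length = k ∧ (∀ B ∈ Bs, IsPermBlock r B) ∧ S = Bs.flatten}

/-- `dblPerm_{r,k}`: sequences `σ₁σ₂⋯σ_k` over `{1, …, r}` where `σ₁, σ_k` are permutations
of `{1, …, r}` and `σ₂, …, σ_{k-1}` contain exactly two occurrences of every symbol. -/
def DblPermFam (r k : ℕ) : Set (List ℕ) :=
  {S | ∃ (F L : List ℕ) (Ms : List (List ℕ)),
      IsPermBlock r F ∧ IsPermBlock r L ∧ Ms.length = k - 2 ∧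
      (∀ B ∈ Ms, IsDoubleBlock r B) ∧ S = F ++ Ms.flatten ++ L}

/-- Doubling of the inner part: every entry doubled except the last. -/
def dblMid : List ℕ → List ℕ
  | [] => []
  | [a] => [a]
  | a :: b :: rest => a :: a :: dblMid (b :: rest)

/-- `dbl σ`: double every occurrence of `σ` except the first and the last. -/
def dbl : List ℕ → List ℕ
  | [] => []
  | a :: rest => a :: dblMid rest

/-- The alternating sequence `1 2 1 2 ⋯` of length `L`. -/
def altSeq (L : ℕ) : List ℕ := (List.range L).map (fun i => i % 2 + 1)

/-- `upSeq a b = a (a+1) ⋯ b`. -/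
def upSeq (a b : ℕ) : List ℕ := List.range' a (b + 1 - a)

/-- `downSeq a b = b (b-1) ⋯ a`. -/
def downSeq (a b : ℕ) : List ℕ := (List.range' a (b + 1 - a)).reverse

/-- The M-shaped sequence `M_k = 1⋯(k+1) k⋯1 2⋯(k+1) k⋯1`. -/
def Mseq (k : ℕ) : List ℕ := upSeq 1 (k+1) ++ downSeq 1 k ++ upSeq 2 (k+1) ++ downSeq 1 k

/-- The zig-zag sequence `Z_k = 1⋯(k+1) k⋯1 2⋯(k+1) k⋯1 2⋯(k+1)`. -/
def Zseq (k : ℕ) : List ℕ :=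
  upSeq 1 (k+1) ++ downSeq 1 k ++ upSeq 2 (k+1) ++ downSeq 1 k ++ upSeq 2 (k+1)

/-- The one-sided comb `C_k = 1 2 ⋯ (k+2) 1 (k+2) 2 (k+2) ⋯ (k+1) (k+2)`. -/
def Cseq (k : ℕ) : List ℕ :=
  upSeq 1 (k+2) ++ (List.range' 1 (k+1)).flatMap (fun a => [a, k+2])

/-- Order-`s` Davenport-Schinzel extremal function `DS_s(n)`. -/
noncomputable def DS (s n : ℕ) : ℕ := ExSeq (altSeq (s+2)) n

/-- Blocked version `DS_s(n,m)`. -/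
noncomputable def DSB (s n m : ℕ) : ℕ := ExSeqB (altSeq (s+2)) n m

/-- Order-`s` double DS extremal function `dblDS_s(n)`. -/
noncomputable def dblDS (s n : ℕ) : ℕ := ExSeq (dbl (altSeq (s+2))) n

/-- Blocked version `dblDS_s(n,m)`. -/
noncomputable def dblDSB (s n m : ℕ) : ℕ := ExSeqB (dbl (altSeq (s+2))) n m

/-- `PERM_{r,s}(n) = Ex(Perm_{r,s+1}, n)`. -/
noncomputable def PERM (r s n : ℕ) : ℕ := ExS (PermFam r (s+1)) r n

/-- `PERM_{r,s}(n,m) = Ex(Perm_{r,s+1}, n, m)`. -/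
noncomputable def PERMB (r s n m : ℕ) : ℕ := ExB (PermFam r (s+1)) n m

/-- `dblPERM_{r,s}(n) = Ex(dblPerm_{r,s+1}, n)`. -/
noncomputable def dblPERM (r s n : ℕ) : ℕ := ExS (DblPermFam r (s+1)) r n

/-- `dblPERM_{r,s}(n,m) = Ex(dblPerm_{r,s+1}, n, m)`. -/
noncomputable def dblPERMB (r s n m : ℕ) : ℕ := ExB (DblPermFam r (s+1)) n m

/-- Ackermann's function `a_{i,j}`: `a_{1,j} = 2^j`, `a_{i,1} = 2` for `i ≥ 2`, and
`a_{i,j} = w ⬝ a_{i-1,w}` with `w = a_{i,j-1}` for `i, j ≥ 2`. -/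
def ackF : ℕ → ℕ → ℕ
  | 0, _ => 0
  | 1, j => 2 ^ j
  | _+2, 0 => 2
  | _+2, 1 => 2
  | i+2, j+2 => ackF (i+2) (j+1) * ackF (i+1) (ackF (i+2) (j+1))
  termination_by i j => (i, j)

/-- The inverse Ackermann function `α(n,m) = min {i ≥ 1 : a_{i,j} ≥ m}`
where `j = max(⌈n/m⌉, 3)`. -/
noncomputable def alphaAck (n m : ℕ) : ℕ :=
  sInf {i : ℕ | 1 ≤ i ∧ m ≤ ackF i (max ((n + m - 1) / m) 3)}

/-- `α(n) = α(n,n)`. -/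
noncomputable def alphaN (n : ℕ) : ℕ := alphaAck n n

/-! ### Infrastructure for the proof of `PERM_recurrence` -/

section PERMRecurrenceAux

open List

/-- Containment is preserved by passing to supersequences. -/
lemma seqContains_of_sublist {σ T S : List ℕ} (h : SeqContains σ T) (hTS : T.Sublist S) :
    SeqContains σ S := by
  obtain ⟨f, hf, hsub⟩ := h
  exact ⟨f, hf, hsub.trans hTS⟩

/-- Freeness is inherited by subsequences. -/
lemma FamFree.sublist {P : Set (List ℕ)} {S T : List ℕ} (h : FamFree P S) (hTS : T.Sublist S) :
    FamFree P T := fun σ hσ hc => h σ hσ (seqContains_of_sublist hc hTS)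

lemma permFam_toFinset {r k : ℕ} {σ : List ℕ} (hk : 1 ≤ k) (hσ : σ ∈ PermFam r k) :
    σ.toFinset = Finset.Icc 1 r := by
  obtain ⟨Bs, hlen, hblocks, rfl⟩ := hσ
  ext a
  simp only [List.mem_toFinset, List.mem_flatten]
  constructor
  · rintro ⟨B, hB, haB⟩
    have := (hblocks B hB).2
    rw [← this]
    exact List.mem_toFinset.2 haB
  · intro ha
    obtain ⟨B, hB⟩ : ∃ B, B ∈ Bs := by
      cases Bs with
      | nil => simp at hlen; omega
      | cons B Bs => exact ⟨B, List.mem_cons_self⟩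
    exact ⟨B, hB, List.mem_toFinset.1 ((hblocks B hB).2 ▸ ha)⟩

lemma famFree_nil {r k : ℕ} (hr : 1 ≤ r) (hk : 1 ≤ k) : FamFree (PermFam r k) [] := by
  rintro σ hσ ⟨f, hf, hsub⟩
  have h1 : σ.toFinset = Finset.Icc 1 r := permFam_toFinset hk hσ
  have hmem : (1 : ℕ) ∈ σ.toFinset := by
    rw [h1]; exact Finset.mem_Icc.2 ⟨le_refl _, hr⟩
  have hσne : σ ≠ [] := by
    intro h; rw [h] at hmem; simp at hmem
  exact hσne (List.map_eq_nil_iff.1 (List.sublist_nil.1 hsub))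

/-- Basic length bound for block-partitioned sequences. -/
lemma length_le_of_blockPartition {S : List ℕ} {n m : ℕ} (hc : S.toFinset.card ≤ n)
    (hb : BlockPartition S m) : S.length ≤ n * m := by
  obtain ⟨Bs, hlen, hnd, rfl⟩ := hb
  rw [List.length_flatten]
  have hB : ∀ B ∈ Bs, B.length ≤ n := by
    intro B hB
    have hsub : B.toFinset ⊆ Bs.flatten.toFinset := by
      intro a ha
      simp only [List.mem_toFinset, List.mem_flatten] at *
      exact ⟨B, hB, ha⟩
    calc B.length = B.toFinset.card := (List.toFinset_card_of_nodup (hnd B hB)).symm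
      _ ≤ Bs.flatten.toFinset.card := Finset.card_le_card hsub
      _ ≤ n := hc
  calc (Bs.map List.length).sum ≤ (Bs.map (fun _ => n)).sum := by
        apply List.sum_le_sum
        intro B hBmem
        exact hB B hBmem
    _ = n * Bs.length := by
        induction Bs with
        | nil => simp
        | cons B Bs ih => simp [ih]; ring
    _ ≤ n * m := Nat.mul_le_mul_left n hlen

def ExBSet (P : Set (List ℕ)) (n m : ℕ) : Set ℕ :=
  {L : ℕ | ∃ S : List ℕ, FamFree P S ∧ S.toFinset.card ≤ n ∧ BlockPartition S m ∧ S.length = L}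

lemma ExB_eq_sSup (P : Set (List ℕ)) (n m : ℕ) : ExB P n m = sSup (ExBSet P n m) := rfl

lemma ExBSet_bddAbove (P : Set (List ℕ)) (n m : ℕ) : BddAbove (ExBSet P n m) := by
  refine ⟨n * m, ?_⟩
  rintro L ⟨S, _, hc, hb, rfl⟩
  exact length_le_of_blockPartition hc hb

lemma blockPartition_nil (m : ℕ) : BlockPartition ([] : List ℕ) m :=
  ⟨[], by simp, by simp, rfl⟩

lemma ExBSet_nonempty {P : Set (List ℕ)} (hnil : FamFree P []) (n m : ℕ) :
    Set.Nonempty (ExBSet P n m) :=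
  ⟨0, [], hnil, by simp, blockPartition_nil m, rfl⟩

lemma le_ExB {P : Set (List ℕ)} {n m : ℕ} {S : List ℕ} (h1 : FamFree P S)
    (h2 : S.toFinset.card ≤ n) (h3 : BlockPartition S m) : S.length ≤ ExB P n m :=
  le_csSup (ExBSet_bddAbove P n m) ⟨S, h1, h2, h3, rfl⟩

lemma ExB_witness {P : Set (List ℕ)} (hnil : FamFree P []) (n m : ℕ) :
    ∃ S : List ℕ, FamFree P S ∧ S.toFinset.card ≤ n ∧ BlockPartition S m ∧
      S.length = ExB P n m :=
  Nat.sSup_mem (ExBSet_nonempty hnil n m) (ExBSet_bddAbove P n m)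

lemma ExB_mono {P : Set (List ℕ)} (hnil : FamFree P []) {n m n' m' : ℕ}
    (hn : n ≤ n') (hm : m ≤ m') : ExB P n m ≤ ExB P n' m' := by
  apply csSup_le_csSup (ExBSet_bddAbove P n' m') (ExBSet_nonempty hnil n m)
  rintro L ⟨S, h1, h2, h3, rfl⟩
  obtain ⟨Bs, hb1, hb2, hb3⟩ := h3
  exact ⟨S, h1, le_trans h2 hn, ⟨Bs, le_trans hb1 hm, hb2, hb3⟩, rfl⟩

/-- Freeness is preserved by injectively relabelling the alphabet. -/
lemma FamFree.map_injective {P : Set (List ℕ)} {S : List ℕ} {g : ℕ → ℕ}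
    (hg : Function.Injective g) (h : FamFree P S) : FamFree P (S.map g) := by
  rintro σ hσ ⟨f, hf, hsub⟩
  classical
  set g' := Function.invFun g with hg'def
  have hg' : ∀ x, g' (g x) = x := Function.leftInverse_invFun hg
  apply h σ hσ
  refine ⟨g' ∘ f, ?_, ?_⟩
  · intro a ha b hb hab
    apply hf a ha b hb
    have hfa : f a ∈ S.map g := hsub.subset (List.mem_map_of_mem (f := f) ha)
    have hfb : f b ∈ S.map g := hsub.subset (List.mem_map_of_mem (f := f) hb)
    obtain ⟨x, _, hxa⟩ := List.mem_map.1 hfa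
    obtain ⟨y, _, hyb⟩ := List.mem_map.1 hfb
    simp only [Function.comp_apply] at hab
    rw [← hxa, ← hyb, hg', hg'] at hab
    rw [← hxa, ← hyb, hab]
  · have h1 : σ.map (g' ∘ f) = (σ.map f).map g' := by rw [List.map_map]
    have h2 : (S.map g).map g' = S := by
      rw [List.map_map]
      have : ∀ x ∈ S, (g' ∘ g) x = x := fun x _ => hg' x
      rw [List.map_congr_left this]; exact List.map_id _
    rw [h1, ← h2]
    exact hsub.map g'

end PERMRecurrenceAux
section PERMRecurrenceAux2

open List

/-- Concatenating free sequences over disjoint alphabets stays free (for `k ≥ 2`). -/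
lemma famFree_append {r k : ℕ} (hk : 2 ≤ k) {S1 S2 : List ℕ}
    (hdisj : ∀ a ∈ S1, ∀ b ∈ S2, a ≠ b)
    (h1 : FamFree (PermFam r k) S1) (h2 : FamFree (PermFam r k) S2) :
    FamFree (PermFam r k) (S1 ++ S2) := by
  rintro σ hσ ⟨f, hf, hsub⟩
  obtain ⟨u, v, huv, hu, hv⟩ := List.sublist_append_iff.1 hsub
  set σ1 := σ.take u.length with hσ1
  set σ2 := σ.drop u.length with hσ2
  have hlu : u.length ≤ σ.length := by
    have := congrArg List.length huv
    simp only [List.length_map, List.length_append] at this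
    omega
  have hu' : σ1.map f = u := by
    have h0 : (σ.map f).take u.length = u := by rw [huv]; exact List.take_left
    rw [hσ1, List.map_take, h0]
  have hv' : σ2.map f = v := by
    have h0 : (σ.map f).drop u.length = v := by
      rw [huv]
      have := List.drop_append (l₁ := u) (l₂ := v) (i := u.length)
      simpa using this
    rw [hσ2, List.map_drop, h0]
  have hmem1 : ∀ c ∈ σ1, f c ∈ S1 := by
    intro c hc
    exact hu.subset (hu' ▸ List.mem_map_of_mem (f := f) hc)
  have hmem2 : ∀ c ∈ σ2, f c ∈ S2 := by
    intro c hc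
    exact hv.subset (hv' ▸ List.mem_map_of_mem (f := f) hc)
  have hIcc : σ.toFinset = Finset.Icc 1 r := permFam_toFinset (by omega) hσ
  obtain ⟨Bsσ, hBl, hBp, hBf⟩ := hσ
  obtain ⟨B0, t, rfl⟩ : ∃ B0 t, Bsσ = B0 :: t := by
    cases Bsσ with
    | nil => simp at hBl; omega
    | cons a l => exact ⟨a, l, rfl⟩
  have htailne : t ≠ [] := by
    intro h
    rw [h] at hBl
    simp at hBl
    omega
  set B1 := B0 with hB1
  set Bk := t.getLast htailne with hBk
  have hB1perm : IsPermBlock r B1 := hBp _ (List.mem_cons_self)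
  have hBkperm : IsPermBlock r Bk := hBp _ (List.mem_cons_of_mem _ (List.getLast_mem htailne))
  -- σ = B1 ++ t.flatten
  have e1 : σ = B1 ++ t.flatten := by
    rw [hBf, List.flatten_cons]
  -- σ = dropLast.flatten ++ Bk
  have e2' : (B0 :: t).dropLast ++ [Bk] = B0 :: t := by
    have := List.dropLast_append_getLast (l := B0 :: t) (by simp)
    rw [List.getLast_cons htailne] at this
    exact this
  have e2 : σ = ((B0 :: t).dropLast).flatten ++ Bk := by
    conv_lhs => rw [hBf, ← e2']
    rw [List.flatten_append, List.flatten_cons, List.flatten_nil, List.append_nil]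
  have hBkmemtail : Bk ∈ t := List.getLast_mem htailne
  have hlen2 : B1.length + Bk.length ≤ σ.length := by
    have h3 : Bk.length ≤ t.flatten.length := by
      rw [List.length_flatten]
      exact List.single_le_sum (fun x _ => Nat.zero_le x) _
        (List.mem_map_of_mem (f := List.length) hBkmemtail)
    have h4 := congrArg List.length e1
    simp only [List.length_append] at h4
    omega
  have hσmem : ∀ c ∈ Finset.Icc 1 r, c ∈ σ := by
    intro c hc
    exact List.mem_toFinset.1 (hIcc ▸ hc)
  have hB1mem : ∀ c ∈ Finset.Icc 1 r, c ∈ B1 := by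
    intro c hc
    exact List.mem_toFinset.1 (hB1perm.2 ▸ hc)
  have hBkmem : ∀ c ∈ Finset.Icc 1 r, c ∈ Bk := by
    intro c hc
    exact List.mem_toFinset.1 (hBkperm.2 ▸ hc)
  have hmemIcc : ∀ c ∈ σ, c ∈ Finset.Icc 1 r := fun c hc => hIcc ▸ List.mem_toFinset.2 hc
  by_cases hcase : u.length ≤ σ.length - Bk.length
  · -- Bk lies entirely inside σ2 : every symbol is on the right side
    have hinitlen : ((B0 :: t).dropLast).flatten.length = σ.length - Bk.length := by
      have := congrArg List.length e2
      simp only [List.length_append] at this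
      omega
    have hBksub : ∀ c ∈ Bk, c ∈ σ2 := by
      intro c hc
      rw [hσ2]
      conv_lhs => rw [e2]
      rw [List.drop_append]
      refine List.mem_append_right _ ?_
      have : u.length - ((B0 :: t).dropLast).flatten.length = 0 := by omega
      rw [this, List.drop_zero]
      exact hc
    have hright : ∀ c ∈ Finset.Icc 1 r, f c ∈ S2 := fun c hc => hmem2 _ (hBksub c (hBkmem c hc))
    have hσ1nil : σ1 = [] := by
      by_contra hne
      have hc0 : σ1.head hne ∈ σ1 := List.head_mem hne
      have hc0σ : σ1.head hne ∈ σ := (List.take_sublist _ _).subset hc0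
      have h5 : f (σ1.head hne) ∈ S1 := hmem1 _ hc0
      have h6 : f (σ1.head hne) ∈ S2 := hright _ (hmemIcc _ hc0σ)
      exact hdisj _ h5 _ h6 rfl
    have hunil : u = [] := by rw [← hu', hσ1nil]; rfl
    apply h2 σ ⟨B0 :: t, hBl, hBp, hBf⟩
    refine ⟨f, hf, ?_⟩
    have : σ.map f = v := by rw [huv, hunil]; rfl
    rw [this]; exact hv
  · -- B1 lies entirely inside σ1 : every symbol is on the left side
    have hB1sub : ∀ c ∈ B1, c ∈ σ1 := by
      intro c hc
      rw [hσ1]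
      conv_lhs => rw [e1]
      rw [List.take_append]
      refine List.mem_append_left _ ?_
      rw [List.take_of_length_le (by omega)]
      exact hc
    have hleft : ∀ c ∈ Finset.Icc 1 r, f c ∈ S1 := fun c hc => hmem1 _ (hB1sub c (hB1mem c hc))
    have hσ2nil : σ2 = [] := by
      by_contra hne
      have hc0 : σ2.head hne ∈ σ2 := List.head_mem hne
      have hc0σ : σ2.head hne ∈ σ := (List.drop_sublist _ _).subset hc0
      have h5 : f (σ2.head hne) ∈ S2 := hmem2 _ hc0
      have h6 : f (σ2.head hne) ∈ S1 := hleft _ (hmemIcc _ hc0σ)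
      exact hdisj _ h6 _ h5 rfl
    have hvnil : v = [] := by rw [← hv', hσ2nil]; rfl
    apply h1 σ ⟨B0 :: t, hBl, hBp, hBf⟩
    refine ⟨f, hf, ?_⟩
    have : σ.map f = u := by rw [huv, hvnil]; simp
    rw [this]; exact hu

/-- Binary superadditivity of the blocked extremal function for `PermFam`. -/
lemma ExB_superadd {r k : ℕ} (hr : 1 ≤ r) (hk : 2 ≤ k) (n1 m1 n2 m2 : ℕ) :
    ExB (PermFam r k) n1 m1 + ExB (PermFam r k) n2 m2 ≤
      ExB (PermFam r k) (n1 + n2) (m1 + m2) := by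
  classical
  have hnil : FamFree (PermFam r k) [] := famFree_nil hr (by omega)
  obtain ⟨S1, h1f, h1c, h1b, h1l⟩ := ExB_witness hnil n1 m1
  obtain ⟨S2, h2f, h2c, h2b, h2l⟩ := ExB_witness hnil n2 m2
  set δ := S1.sum + 1 with hδdef
  have hδ : ∀ a ∈ S1, a < δ := by
    intro a ha
    have := List.single_le_sum (fun (x : ℕ) _ => Nat.zero_le x) a ha
    omega
  set g : ℕ → ℕ := fun x => x + δ with hgdef
  have hg : Function.Injective g := fun x y h => by simpa [hgdef] using h
  set S2' := S2.map g with hS2'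
  have hdisj : ∀ a ∈ S1, ∀ b ∈ S2', a ≠ b := by
    intro a ha b hb
    obtain ⟨x, _, rfl⟩ := List.mem_map.1 hb
    have := hδ a ha
    simp only [hgdef]
    omega
  have hfree : FamFree (PermFam r k) (S1 ++ S2') :=
    famFree_append hk hdisj h1f (h2f.map_injective hg)
  have hcard : (S1 ++ S2').toFinset.card ≤ n1 + n2 := by
    rw [List.toFinset_append]
    calc (S1.toFinset ∪ S2'.toFinset).card ≤ S1.toFinset.card + S2'.toFinset.card :=
          Finset.card_union_le _ _
      _ ≤ n1 + n2 := by
          have hsub : S2'.toFinset ⊆ S2.toFinset.image g := by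
            intro b hb
            obtain ⟨x, hx, rfl⟩ := List.mem_map.1 (List.mem_toFinset.1 hb)
            exact Finset.mem_image.2 ⟨x, List.mem_toFinset.2 hx, rfl⟩
          have := (Finset.card_le_card hsub).trans (Finset.card_image_le)
          omega
  have hblocks : BlockPartition (S1 ++ S2') (m1 + m2) := by
    obtain ⟨Bs1, hb11, hb12, hb13⟩ := h1b
    obtain ⟨Bs2, hb21, hb22, hb23⟩ := h2b
    refine ⟨Bs1 ++ Bs2.map (List.map g), ?_, ?_, ?_⟩
    · simp only [List.length_append, List.length_map]; omega
    · intro B hB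
      rcases List.mem_append.1 hB with h | h
      · exact hb12 B h
      · obtain ⟨B2, hB2, rfl⟩ := List.mem_map.1 h
        exact (hb22 B2 hB2).map hg
    · rw [List.flatten_append, ← List.map_flatten, ← hb13, ← hb23, hS2']
  have hlen : (S1 ++ S2').length =
      ExB (PermFam r k) n1 m1 + ExB (PermFam r k) n2 m2 := by
    rw [List.length_append, hS2', List.length_map, h1l, h2l]
  rw [← hlen]
  exact le_ExB hfree hcard hblocks

/-- Superadditivity over families indexed by `Fin t`. -/
lemma ExB_superadd_sum {r k : ℕ} (hr : 1 ≤ r) (hk : 2 ≤ k) :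
    ∀ {t : ℕ} (f g : Fin t → ℕ),
      ∑ q, ExB (PermFam r k) (f q) (g q) ≤ ExB (PermFam r k) (∑ q, f q) (∑ q, g q) := by
  intro t
  induction t with
  | zero => intro f g; simp
  | succ t ih =>
    intro f g
    rw [Fin.sum_univ_succ (f := fun q => ExB (PermFam r k) (f q) (g q)),
        Fin.sum_univ_succ (f := f), Fin.sum_univ_succ (f := g)]
    calc ExB (PermFam r k) (f 0) (g 0) + ∑ q : Fin t, ExB (PermFam r k) (f q.succ) (g q.succ)
        ≤ ExB (PermFam r k) (f 0) (g 0) +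
          ExB (PermFam r k) (∑ q : Fin t, f q.succ) (∑ q : Fin t, g q.succ) := by
          exact Nat.add_le_add_left (ih _ _) _
      _ ≤ _ := ExB_superadd hr hk _ _ _ _

end PERMRecurrenceAux2
section PERMRecurrenceAux3

open List

/-- Extend a permutation-family pattern on the right, using one occurrence of each
symbol taken from `W`. -/
lemma surgery_right {r k : ℕ} (hk : 1 ≤ k) {σ X W : List ℕ} {f : ℕ → ℕ} {D : Finset ℕ}
    (hσ : σ ∈ PermFam r k)
    (hf : ∀ a ∈ σ, ∀ b ∈ σ, f a = f b → a = b)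
    (hsub : (σ.map f).Sublist X) (himg : ∀ v ∈ σ.map f, v ∈ D)
    (hDW : ∀ v ∈ D, v ∈ W) :
    ∃ (σ' : List ℕ) (f' : ℕ → ℕ), σ' ∈ PermFam r (k + 1) ∧
      (∀ a ∈ σ', ∀ b ∈ σ', f' a = f' b → a = b) ∧
      (σ'.map f').Sublist (X ++ W) ∧ (∀ v ∈ σ'.map f', v ∈ D) := by
  classical
  have hIcc : σ.toFinset = Finset.Icc 1 r := permFam_toFinset hk hσ
  have hmemσ : ∀ c ∈ Finset.Icc 1 r, c ∈ σ := fun c hc => List.mem_toFinset.1 (hIcc ▸ hc)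
  set E : Finset ℕ := (Finset.Icc 1 r).image f with hE
  have hED : ∀ v ∈ E, v ∈ D := by
    intro v hv
    obtain ⟨c, hc, rfl⟩ := Finset.mem_image.1 hv
    exact himg _ (List.mem_map_of_mem (f := f) (hmemσ c hc))
  set R1 : List ℕ := (W.filter (fun v => v ∈ E)).dedup with hR1
  have hR1W : R1 <+ W := (List.dedup_sublist _).trans (List.filter_sublist)
  have hR1nd : R1.Nodup := List.nodup_dedup _
  have hR1mem : ∀ v, v ∈ R1 ↔ v ∈ E := by
    intro v
    rw [hR1, List.mem_dedup, List.mem_filter]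
    constructor
    · rintro ⟨_, h⟩; simpa using h
    · intro h; exact ⟨hDW v (hED v h), by simpa using h⟩
  have hinj : Set.InjOn f (Finset.Icc 1 r : Finset ℕ) := by
    intro a ha b hb hab
    exact hf a (hmemσ a (Finset.mem_coe.1 ha)) b (hmemσ b (Finset.mem_coe.1 hb)) hab
  set g : ℕ → ℕ := Function.invFunOn f (Finset.Icc 1 r : Finset ℕ) with hg
  have hfg : ∀ v ∈ E, f (g v) = v := by
    intro v hv
    obtain ⟨c, hc, rfl⟩ := Finset.mem_image.1 hv
    exact Function.invFunOn_eq ⟨c, Finset.mem_coe.2 hc, rfl⟩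
  have hgmem : ∀ v ∈ E, g v ∈ Finset.Icc 1 r := by
    intro v hv
    obtain ⟨c, hc, rfl⟩ := Finset.mem_image.1 hv
    have h := Function.invFunOn_mem (f := f) (s := ((Finset.Icc 1 r : Finset ℕ) : Set ℕ))
      ⟨c, Finset.mem_coe.2 hc, rfl⟩
    exact Finset.mem_coe.1 h
  have hgf : ∀ c ∈ Finset.Icc 1 r, g (f c) = c := by
    intro c hc
    exact hinj.leftInvOn_invFunOn (Finset.mem_coe.2 hc)
  set π : List ℕ := R1.map g with hπ
  have hπf : π.map f = R1 := by
    rw [hπ, List.map_map]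
    have : ∀ v ∈ R1, (f ∘ g) v = v := fun v hv => hfg v ((hR1mem v).1 hv)
    rw [List.map_congr_left this]
    exact List.map_id _
  have hπnd : π.Nodup := by
    refine List.Nodup.map_on ?_ hR1nd
    intro x hx y hy hxy
    have := congrArg f hxy
    rwa [hfg x ((hR1mem x).1 hx), hfg y ((hR1mem y).1 hy)] at this
  have hπIcc : π.toFinset = Finset.Icc 1 r := by
    ext c
    simp only [List.mem_toFinset, hπ, List.mem_map]
    constructor
    · rintro ⟨v, hv, rfl⟩
      exact hgmem v ((hR1mem v).1 hv)
    · intro hc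
      refine ⟨f c, (hR1mem _).2 (Finset.mem_image.2 ⟨c, hc, rfl⟩), hgf c hc⟩
  have hπperm : IsPermBlock r π := ⟨hπnd, hπIcc⟩
  refine ⟨σ ++ π, f, ?_, ?_, ?_, ?_⟩
  · obtain ⟨Bs, hBl, hBp, hBf⟩ := hσ
    refine ⟨Bs ++ [π], by simp [hBl], ?_, by rw [List.flatten_append, ← hBf]; simp⟩
    intro B hB
    rcases List.mem_append.1 hB with h | h
    · exact hBp B h
    · simp only [List.mem_singleton] at h
      rw [h]; exact hπperm
  · intro a ha b hb hab
    have hmem' : ∀ x, x ∈ σ ++ π → x ∈ σ := by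
      intro x hx
      rcases List.mem_append.1 hx with h | h
      · exact h
      · refine hmemσ x ?_
        rw [← hπIcc]
        exact List.mem_toFinset.2 h
    exact hf a (hmem' a ha) b (hmem' b hb) hab
  · rw [List.map_append, hπf]
    exact hsub.append hR1W
  · intro v hv
    rw [List.map_append] at hv
    rcases List.mem_append.1 hv with h | h
    · exact himg v h
    · rw [hπf] at h
      exact hED v ((hR1mem v).1 h)

/-- Extend a permutation-family pattern on the left, using one occurrence of each
symbol taken from `U`. -/
lemma surgery_left {r k : ℕ} (hk : 1 ≤ k) {σ X U : List ℕ} {f : ℕ → ℕ} {D : Finset ℕ}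
    (hσ : σ ∈ PermFam r k)
    (hf : ∀ a ∈ σ, ∀ b ∈ σ, f a = f b → a = b)
    (hsub : (σ.map f).Sublist X) (himg : ∀ v ∈ σ.map f, v ∈ D)
    (hDU : ∀ v ∈ D, v ∈ U) :
    ∃ (σ' : List ℕ) (f' : ℕ → ℕ), σ' ∈ PermFam r (k + 1) ∧
      (∀ a ∈ σ', ∀ b ∈ σ', f' a = f' b → a = b) ∧
      (σ'.map f').Sublist (U ++ X) ∧ (∀ v ∈ σ'.map f', v ∈ D) := by
  classical
  have hIcc : σ.toFinset = Finset.Icc 1 r := permFam_toFinset hk hσ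
  have hmemσ : ∀ c ∈ Finset.Icc 1 r, c ∈ σ := fun c hc => List.mem_toFinset.1 (hIcc ▸ hc)
  set E : Finset ℕ := (Finset.Icc 1 r).image f with hE
  have hED : ∀ v ∈ E, v ∈ D := by
    intro v hv
    obtain ⟨c, hc, rfl⟩ := Finset.mem_image.1 hv
    exact himg _ (List.mem_map_of_mem (f := f) (hmemσ c hc))
  set R1 : List ℕ := (U.filter (fun v => v ∈ E)).dedup with hR1
  have hR1U : R1 <+ U := (List.dedup_sublist _).trans (List.filter_sublist)
  have hR1nd : R1.Nodup := List.nodup_dedup _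
  have hR1mem : ∀ v, v ∈ R1 ↔ v ∈ E := by
    intro v
    rw [hR1, List.mem_dedup, List.mem_filter]
    constructor
    · rintro ⟨_, h⟩; simpa using h
    · intro h; exact ⟨hDU v (hED v h), by simpa using h⟩
  have hinj : Set.InjOn f (Finset.Icc 1 r : Finset ℕ) := by
    intro a ha b hb hab
    exact hf a (hmemσ a (Finset.mem_coe.1 ha)) b (hmemσ b (Finset.mem_coe.1 hb)) hab
  set g : ℕ → ℕ := Function.invFunOn f (Finset.Icc 1 r : Finset ℕ) with hg
  have hfg : ∀ v ∈ E, f (g v) = v := by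
    intro v hv
    obtain ⟨c, hc, rfl⟩ := Finset.mem_image.1 hv
    exact Function.invFunOn_eq ⟨c, Finset.mem_coe.2 hc, rfl⟩
  have hgmem : ∀ v ∈ E, g v ∈ Finset.Icc 1 r := by
    intro v hv
    obtain ⟨c, hc, rfl⟩ := Finset.mem_image.1 hv
    have h := Function.invFunOn_mem (f := f) (s := ((Finset.Icc 1 r : Finset ℕ) : Set ℕ))
      ⟨c, Finset.mem_coe.2 hc, rfl⟩
    exact Finset.mem_coe.1 h
  have hgf : ∀ c ∈ Finset.Icc 1 r, g (f c) = c := by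
    intro c hc
    exact hinj.leftInvOn_invFunOn (Finset.mem_coe.2 hc)
  set π : List ℕ := R1.map g with hπ
  have hπf : π.map f = R1 := by
    rw [hπ, List.map_map]
    have : ∀ v ∈ R1, (f ∘ g) v = v := fun v hv => hfg v ((hR1mem v).1 hv)
    rw [List.map_congr_left this]
    exact List.map_id _
  have hπnd : π.Nodup := by
    refine List.Nodup.map_on ?_ hR1nd
    intro x hx y hy hxy
    have := congrArg f hxy
    rwa [hfg x ((hR1mem x).1 hx), hfg y ((hR1mem y).1 hy)] at this
  have hπIcc : π.toFinset = Finset.Icc 1 r := by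
    ext c
    simp only [List.mem_toFinset, hπ, List.mem_map]
    constructor
    · rintro ⟨v, hv, rfl⟩
      exact hgmem v ((hR1mem v).1 hv)
    · intro hc
      refine ⟨f c, (hR1mem _).2 (Finset.mem_image.2 ⟨c, hc, rfl⟩), hgf c hc⟩
  have hπperm : IsPermBlock r π := ⟨hπnd, hπIcc⟩
  refine ⟨π ++ σ, f, ?_, ?_, ?_, ?_⟩
  · obtain ⟨Bs, hBl, hBp, hBf⟩ := hσ
    refine ⟨π :: Bs, by simp [hBl], ?_, by rw [List.flatten_cons, ← hBf]⟩
    intro B hB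
    rcases List.mem_cons.1 hB with h | h
    · rw [h]; exact hπperm
    · exact hBp B h
  · intro a ha b hb hab
    have hmem' : ∀ x, x ∈ π ++ σ → x ∈ σ := by
      intro x hx
      rcases List.mem_append.1 hx with h | h
      · refine hmemσ x ?_
        rw [← hπIcc]
        exact List.mem_toFinset.2 h
      · exact h
    exact hf a (hmem' a ha) b (hmem' b hb) hab
  · rw [List.map_append, hπf]
    exact hR1U.append hsub
  · intro v hv
    rw [List.map_append] at hv
    rcases List.mem_append.1 hv with h | h
    · rw [hπf] at h
      exact hED v ((hR1mem v).1 h)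
    · exact himg v h

/-- If `T` sits inside the middle part of a free sequence and all its symbols reappear
after the middle part, then `T` is free at one order lower. -/
lemma famFree_part_right {r k : ℕ} (hk : 1 ≤ k) {Xpre A Xpost T : List ℕ}
    (hS : FamFree (PermFam r (k + 1)) (Xpre ++ (A ++ Xpost)))
    (hT : T.Sublist A) (hocc : ∀ v ∈ T, v ∈ Xpost) :
    FamFree (PermFam r k) T := by
  rintro σ hσ ⟨f, hf, hsub⟩
  obtain ⟨σ', f', hσ', hf', hsub', _⟩ :=
    surgery_right (D := T.toFinset) hk hσ hf hsub
      (fun v hv => List.mem_toFinset.2 (hsub.subset hv))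
      (fun v hv => hocc v (List.mem_toFinset.1 hv))
  apply hS σ' hσ'
  refine ⟨f', hf', hsub'.trans ?_⟩
  have h1 : T ++ Xpost <+ A ++ Xpost := hT.append (List.Sublist.refl _)
  calc T ++ Xpost <+ A ++ Xpost := h1
    _ <+ Xpre ++ (A ++ Xpost) := List.sublist_append_right _ _

lemma famFree_part_left {r k : ℕ} (hk : 1 ≤ k) {Xpre A Xpost T : List ℕ}
    (hS : FamFree (PermFam r (k + 1)) (Xpre ++ (A ++ Xpost)))
    (hT : T.Sublist A) (hocc : ∀ v ∈ T, v ∈ Xpre) :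
    FamFree (PermFam r k) T := by
  rintro σ hσ ⟨f, hf, hsub⟩
  obtain ⟨σ', f', hσ', hf', hsub', _⟩ :=
    surgery_left (D := T.toFinset) hk hσ hf hsub
      (fun v hv => List.mem_toFinset.2 (hsub.subset hv))
      (fun v hv => hocc v (List.mem_toFinset.1 hv))
  apply hS σ' hσ'
  refine ⟨f', hf', hsub'.trans ?_⟩
  refine List.Sublist.append (List.Sublist.refl _) ?_
  exact hT.trans (List.sublist_append_left _ _)

lemma famFree_part_both {r k : ℕ} (hk : 1 ≤ k) {Xpre A Xpost T : List ℕ}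
    (hS : FamFree (PermFam r (k + 2)) (Xpre ++ (A ++ Xpost)))
    (hT : T.Sublist A) (hoccL : ∀ v ∈ T, v ∈ Xpre) (hoccR : ∀ v ∈ T, v ∈ Xpost) :
    FamFree (PermFam r k) T := by
  rintro σ hσ ⟨f, hf, hsub⟩
  obtain ⟨σ1, f1, hσ1, hf1, hsub1, himg1⟩ :=
    surgery_right (D := T.toFinset) hk hσ hf hsub
      (fun v hv => List.mem_toFinset.2 (hsub.subset hv))
      (fun v hv => hoccR v (List.mem_toFinset.1 hv))
  obtain ⟨σ2, f2, hσ2, hf2, hsub2, _⟩ :=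
    surgery_left (D := T.toFinset) (by omega) hσ1 hf1 hsub1 himg1
      (fun v hv => hoccL v (List.mem_toFinset.1 hv))
  apply hS σ2 hσ2
  refine ⟨f2, hf2, hsub2.trans ?_⟩
  refine List.Sublist.append (List.Sublist.refl _) ?_
  exact hT.append (List.Sublist.refl _)

end PERMRecurrenceAux3
section PERMRecurrenceAux4

open List

/-- Keep only the last occurrence of every symbol. -/
def keepLast : List ℕ → List ℕ
  | [] => []
  | a :: l => if a ∈ l then keepLast l else a :: keepLast l

lemma keepLast_sublist (l : List ℕ) : keepLast l <+ l := by
  induction l with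
  | nil => exact List.Sublist.refl _
  | cons a l ih =>
    rw [keepLast]
    split
    · exact ih.cons a
    · exact ih.cons₂ a

lemma mem_keepLast {a : ℕ} {l : List ℕ} : a ∈ keepLast l ↔ a ∈ l := by
  induction l with
  | nil => simp [keepLast]
  | cons b l ih =>
    rw [keepLast]
    split
    · rename_i h
      rw [ih, List.mem_cons]
      constructor
      · exact Or.inr
      · rintro (rfl | h2)
        · exact h
        · exact h2
    · rw [List.mem_cons, List.mem_cons, ih]

lemma keepLast_nodup (l : List ℕ) : (keepLast l).Nodup := by
  induction l with
  | nil => exact List.nodup_nil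
  | cons a l ih =>
    rw [keepLast]
    split
    · exact ih
    · rename_i h
      exact List.nodup_cons.2 ⟨fun hmem => h (mem_keepLast.1 hmem), ih⟩

lemma keepLast_toFinset (l : List ℕ) : (keepLast l).toFinset = l.toFinset := by
  ext a
  simp [mem_keepLast]

lemma keepLast_length (l : List ℕ) : (keepLast l).length = l.toFinset.card := by
  rw [← keepLast_toFinset, List.toFinset_card_of_nodup (keepLast_nodup l)]

/-- Cut a list into chunks of prescribed sizes. -/
def chunksL {α : Type*} : List ℕ → List α → List (List α)
  | [], _ => []
  | k :: ks, l => l.take k :: chunksL ks (l.drop k)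

lemma chunksL_length {α : Type*} (ks : List ℕ) (l : List α) :
    (chunksL ks l).length = ks.length := by
  induction ks generalizing l with
  | nil => rfl
  | cons k ks ih => simp [chunksL, ih]

lemma chunksL_flatten {α : Type*} (ks : List ℕ) (l : List α) (h : l.length ≤ ks.sum) :
    (chunksL ks l).flatten = l := by
  induction ks generalizing l with
  | nil =>
    simp only [List.sum_nil, Nat.le_zero, List.length_eq_zero_iff] at h
    rw [h]; rfl
  | cons k ks ih =>
    simp only [chunksL, List.flatten_cons]
    rw [ih (l.drop k) (by simp only [List.length_drop, List.sum_cons] at *; omega)]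
    exact List.take_append_drop k l

lemma chunksL_getD_length {α : Type*} (ks : List ℕ) (l : List α) (h : ks.sum ≤ l.length)
    {i : ℕ} (hi : i < ks.length) :
    ((chunksL ks l).getD i []).length = ks.getD i 0 := by
  induction ks generalizing l i with
  | nil => simp at hi
  | cons k ks ih =>
    cases i with
    | zero =>
      simp only [chunksL, List.getD_cons_zero, List.length_take]
      simp only [List.sum_cons] at h
      omega
    | succ i =>
      simp only [chunksL, List.getD_cons_succ]
      refine ih (l.drop k) ?_ ?_
      · simp only [List.length_drop, List.sum_cons] at *; omega
      · simpa using hi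

lemma chunksL_mem_sublist {α : Type*} (ks : List ℕ) (l : List α) {c : List α}
    (hc : c ∈ chunksL ks l) : c <+ l := by
  induction ks generalizing l with
  | nil => simp [chunksL] at hc
  | cons k ks ih =>
    simp only [chunksL, List.mem_cons] at hc
    rcases hc with rfl | hc
    · exact List.take_sublist _ _
    · exact (ih _ hc).trans (List.drop_sublist _ _)

/-- Splitting a flattened list at one of its pieces. -/
lemma flatten_split {α : Type*} (L : List (List α)) (i : ℕ) (h : i < L.length) :
    L.flatten = (L.take i).flatten ++ (L[i] ++ (L.drop (i + 1)).flatten) := by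
  conv_lhs => rw [← List.take_append_drop i L]
  rw [List.flatten_append, List.drop_eq_getElem_cons h, List.flatten_cons]

lemma length_filter_split (l : List ℕ) (p : ℕ → Bool) :
    l.length = (l.filter p).length + (l.filter (fun a => !(p a))).length := by
  induction l with
  | nil => simp
  | cons a l ih =>
    by_cases h : p a <;> simp [List.filter_cons, h, ih] <;> omega

lemma flatten_ofFn_sublist {t : ℕ} (f g : Fin t → List ℕ) (h : ∀ q, f q <+ g q) :
    (List.ofFn f).flatten <+ (List.ofFn g).flatten := by
  induction t with
  | zero => simp
  | succ t ih =>
    rw [List.ofFn_succ, List.ofFn_succ, List.flatten_cons, List.flatten_cons]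
    exact (h 0).append (ih _ _ fun q => h q.succ)

lemma sum_card_filter_swap {G : Finset ℕ} {t : ℕ} (p : Fin t → ℕ → Prop)
    [∀ q a, Decidable (p q a)] :
    ∑ q : Fin t, (G.filter (p q)).card =
      ∑ a ∈ G, (Finset.univ.filter (fun q => p q a)).card := by
  simp only [Finset.card_filter]
  rw [Finset.sum_comm]

end PERMRecurrenceAux4

/-- The recurrence for `PERM_{r,s}(n,m)` over uniform interval
partitions: for any partition of the `m` blocks into `m̂` intervals of positive sizes
there is a local/global alphabet partition satisfying the stated inequalities. -/
theorem PERM_recurrence :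
    ∀ r s n m : ℕ, 2 ≤ r → 3 ≤ s → 1 ≤ n → 1 ≤ m →
      ∀ mhat : ℕ, 2 ≤ mhat → ∀ mp : Fin mhat → ℕ,
        (∀ q, 1 ≤ mp q) → (∑ q, mp q) = m →
        ∃ (nhat : ℕ) (np : Fin mhat → ℕ),
          nhat + ∑ q, np q = n ∧
          (mhat = 2 →
            PERMB r s n m ≤ (∑ q, PERMB r s (np q) (mp q))
              + PERMB r (s - 1) (2 * nhat) m) ∧
          (2 < mhat →
            PERMB r s n m ≤ (∑ q, PERMB r s (np q) (mp q))
              + 2 * PERMB r (s - 1) nhat m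
              + PERMB r (s - 2) (PERMB r s nhat mhat - 2 * nhat) m) := by
  intro r s n m hr hs hn hm mhat hmhat mp hmp hmpsum
  classical
  have hr1 : 1 ≤ r := by omega
  have hnilP : FamFree (PermFam r (s + 1)) [] := famFree_nil hr1 (by omega)
  have hnil1 : FamFree (PermFam r s) [] := famFree_nil hr1 (by omega)
  have hnil2 : FamFree (PermFam r (s - 1)) [] := famFree_nil hr1 (by omega)
  obtain ⟨S, hfree, hcard, hbp, hlen⟩ := ExB_witness hnilP n m
  obtain ⟨Bs0, hBs0len, hBs0nd, hS0⟩ := hbp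
  set Bs : List (List ℕ) := Bs0 ++ List.replicate (m - Bs0.length) [] with hBsdef
  have hBslen : Bs.length = m := by
    rw [hBsdef, List.length_append, List.length_replicate]; omega
  have hBsnd : ∀ B ∈ Bs, B.Nodup := by
    intro B hB
    rcases List.mem_append.1 hB with h | h
    · exact hBs0nd B h
    · rw [List.eq_of_mem_replicate h]; exact List.nodup_nil
  have hSflat : S = Bs.flatten := by
    rw [hBsdef, List.flatten_append, hS0]
    have hrep : (List.replicate (m - Bs0.length) ([] : List ℕ)).flatten = [] := by
      generalize (m - Bs0.length) = j
      induction j with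
      | zero => rfl
      | succ j ih => rw [List.replicate_succ, List.flatten_cons, ih]; rfl
    rw [hrep, List.append_nil]
  set sizes : List ℕ := List.ofFn mp with hsizesdef
  have hsizeslen : sizes.length = mhat := by rw [hsizesdef, List.length_ofFn]
  have hsizessum : sizes.sum = m := by rw [hsizesdef, List.sum_ofFn]; exact hmpsum
  set CL := chunksL sizes Bs with hCLdef
  have hCLlen : CL.length = mhat := by rw [hCLdef, chunksL_length, hsizeslen]
  have hCLflat : CL.flatten = Bs := chunksL_flatten _ _ (by omega)
  set AD : ℕ → List ℕ := fun i => (CL.getD i []).flatten with hADdef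
  set ofnA : List (List ℕ) := List.ofFn (fun q : Fin mhat => AD q) with hofnAdef
  have hofnAlen : ofnA.length = mhat := by rw [hofnAdef, List.length_ofFn]
  have hofnA_get : ∀ (i : ℕ) (h : i < mhat), ofnA[i]'(by omega) = AD i := by
    intro i h
    simp only [hofnAdef, List.getElem_ofFn]
  have hofnA_eq : ofnA = CL.map List.flatten := by
    apply List.ext_getElem
    · rw [hofnAlen, List.length_map, hCLlen]
    · intro i h1 h2
      rw [hofnA_get i (by rw [hofnAlen] at h1; omega)]
      simp only [List.getElem_map, hADdef]
      rw [List.getD_eq_getElem _ _ (by rw [List.length_map] at h2; omega)]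
  have hSparts : S = ofnA.flatten := by
    rw [hofnA_eq, ← List.flatten_flatten, hCLflat, ← hSflat]
  -- splitting S around part q
  have hsplit : ∀ (q : ℕ), q < mhat →
      S = ((ofnA.take q).flatten) ++ (AD q ++ ((ofnA.drop (q + 1)).flatten)) := by
    intro q hq
    rw [hSparts]
    have := flatten_split ofnA q (by omega)
    rw [hofnA_get q hq] at this
    exact this
  have hADsubS : ∀ (q : ℕ), q < mhat → (AD q).Sublist S := by
    intro q hq
    rw [hsplit q hq]
    exact (List.sublist_append_left _ _).trans (List.sublist_append_right _ _)
  have hADnil : ∀ (i : ℕ), mhat ≤ i → AD i = [] := by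
    intro i hi
    rw [hADdef]
    simp only
    rw [List.getD_eq_default _ _ (by omega)]
    rfl
  -- first and last parts of a symbol
  set occ : ℕ → Set ℕ := fun a => {i | a ∈ AD i} with hoccdef
  have hoccbdd : ∀ a, ∀ i ∈ occ a, i < mhat := by
    intro a i hi
    by_contra hcon
    rw [hoccdef] at hi
    simp only [Set.mem_setOf_eq] at hi
    rw [hADnil i (by omega)] at hi
    simp at hi
  have hoccBdd : ∀ a, BddAbove (occ a) :=
    fun a => ⟨mhat, fun j hj => le_of_lt (hoccbdd a j hj)⟩
  set fp : ℕ → ℕ := fun a => sInf (occ a) with hfpdef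
  set lp : ℕ → ℕ := fun a => sSup (occ a) with hlpdef
  have hfp_le : ∀ a q, a ∈ AD q → fp a ≤ q := fun a q h => Nat.sInf_le h
  have hle_lp : ∀ a q, a ∈ AD q → q ≤ lp a := fun a q h => le_csSup (hoccBdd a) h
  have hfp_mem : ∀ a q, a ∈ AD q → a ∈ AD (fp a) := by
    intro a q h
    have : fp a ∈ occ a := Nat.sInf_mem ⟨q, h⟩
    exact this
  have hlp_mem : ∀ a q, a ∈ AD q → a ∈ AD (lp a) := by
    intro a q h
    have : lp a ∈ occ a := Nat.sSup_mem ⟨q, h⟩ (hoccBdd a)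
    exact this
  have hlp_lt : ∀ a q, a ∈ AD q → lp a < mhat := fun a q h => hoccbdd a _ (hlp_mem a q h)
  have hAD_S : ∀ a q, q < mhat → a ∈ AD q → a ∈ S := by
    intro a q hq h
    exact (hADsubS q hq).subset h
  -- the four classes of occurrences inside part q
  set pfp : ℕ → ℕ → Bool := fun q a => decide (fp a = q) with hpfpdef
  set plp : ℕ → ℕ → Bool := fun q a => decide (lp a = q) with hplpdef
  set Lq : ℕ → List ℕ := fun q => ((AD q).filter (pfp q)).filter (plp q) with hLqdef
  set Hq : ℕ → List ℕ := fun q => ((AD q).filter (pfp q)).filter (fun a => !(plp q a)) with hHqdef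
  set Tq : ℕ → List ℕ := fun q => ((AD q).filter (fun a => !(pfp q a))).filter (plp q) with hTqdef
  set Mq : ℕ → List ℕ :=
    fun q => ((AD q).filter (fun a => !(pfp q a))).filter (fun a => !(plp q a)) with hMqdef
  have hlen4 : ∀ q : ℕ, (AD q).length =
      (Lq q).length + (Hq q).length + ((Tq q).length + (Mq q).length) := by
    intro q
    rw [length_filter_split (AD q) (pfp q),
        length_filter_split ((AD q).filter (pfp q)) (plp q),
        length_filter_split ((AD q).filter fun a => !(pfp q a)) (plp q)]
  have hmemL : ∀ q a, a ∈ Lq q ↔ a ∈ AD q ∧ fp a = q ∧ lp a = q := by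
    intro q a
    simp only [hLqdef, List.mem_filter, hpfpdef, hplpdef, decide_eq_true_eq, Bool.not_eq_true', decide_eq_false_iff_not, and_assoc]
  have hmemH : ∀ q a, a ∈ Hq q ↔ a ∈ AD q ∧ fp a = q ∧ ¬(lp a = q) := by
    intro q a
    simp only [hHqdef, List.mem_filter, hpfpdef, hplpdef, decide_eq_true_eq, Bool.not_eq_true', decide_eq_false_iff_not, and_assoc]
  have hmemT : ∀ q a, a ∈ Tq q ↔ a ∈ AD q ∧ ¬(fp a = q) ∧ lp a = q := by
    intro q a
    simp only [hTqdef, List.mem_filter, hpfpdef, hplpdef, decide_eq_true_eq, Bool.not_eq_true', decide_eq_false_iff_not, and_assoc]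
  have hmemM : ∀ q a, a ∈ Mq q ↔ a ∈ AD q ∧ ¬(fp a = q) ∧ ¬(lp a = q) := by
    intro q a
    simp only [hMqdef, List.mem_filter, hpfpdef, hplpdef, decide_eq_true_eq, Bool.not_eq_true', decide_eq_false_iff_not, and_assoc]
  -- each class is a block partition with (mp q) blocks
  have hBP : ∀ (q : Fin mhat) (pr : ℕ → Bool), BlockPartition ((AD (q : ℕ)).filter pr) (mp q) := by
    intro q pr
    refine ⟨(CL.getD (q : ℕ) []).map (List.filter pr), ?_, ?_, ?_⟩
    · rw [List.length_map]
      have h1 := chunksL_getD_length sizes Bs (by omega) (i := (q : ℕ)) (by omega)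
      have h2 : sizes.getD (q : ℕ) 0 = mp q := by
        rw [hsizesdef, List.getD_eq_getElem _ _ (by rw [List.length_ofFn]; exact q.2),
          List.getElem_ofFn]
      rw [← hCLdef] at h1
      omega
    · intro B hB
      obtain ⟨B0, hB0, rfl⟩ := List.mem_map.1 hB
      have hmemCL : CL.getD (q : ℕ) [] ∈ CL := by
        rw [List.getD_eq_getElem _ _ (by omega)]
        exact List.getElem_mem _
      have hB0Bs : B0 ∈ Bs := by
        rw [← hCLflat]
        exact List.mem_flatten.2 ⟨_, hmemCL, hB0⟩
      exact (hBsnd B0 hB0Bs).filter pr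
    · rw [hADdef]
      simp only
      exact List.filter_flatten
  -- occurrences of symbols in earlier/later parts
  have hpost_mem : ∀ (q j v : ℕ), q < j → j < mhat → v ∈ AD j →
      v ∈ ((ofnA.drop (q + 1)).flatten) := by
    intro q j v hqj hj hv
    refine List.mem_flatten.2 ⟨AD j, ?_, hv⟩
    have h1 : j - (q + 1) < (ofnA.drop (q + 1)).length := by
      rw [List.length_drop, hofnAlen]; omega
    have h2 : (ofnA.drop (q + 1))[j - (q + 1)]'h1 = ofnA[j]'(by omega) := by
      rw [List.getElem_drop]
      congr 1
      omega
    have h3 := List.getElem_mem h1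
    rw [h2, hofnA_get j hj] at h3
    exact h3
  have hpre_mem : ∀ (q j v : ℕ), j < q → q < mhat → v ∈ AD j →
      v ∈ ((ofnA.take q).flatten) := by
    intro q j v hjq hq hv
    refine List.mem_flatten.2 ⟨AD j, ?_, hv⟩
    have h1 : j < (ofnA.take q).length := by
      rw [List.length_take, hofnAlen]; omega
    have h2 : (ofnA.take q)[j]'h1 = ofnA[j]'(by omega) := List.getElem_take
    have h3 := List.getElem_mem h1
    rw [h2, hofnA_get j (by omega)] at h3
    exact h3
  -- global and local symbol sets
  set T0 : Finset ℕ := S.toFinset with hT0def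
  set G : Finset ℕ := T0.filter (fun a => fp a ≠ lp a) with hGdef
  set locS : Fin mhat → Finset ℕ :=
    fun q => T0.filter (fun a => fp a = (q : ℕ) ∧ lp a = (q : ℕ)) with hlocSdef
  set headS : Fin mhat → Finset ℕ := fun q => G.filter (fun a => fp a = (q : ℕ)) with hheadSdef
  set tailS : Fin mhat → Finset ℕ := fun q => G.filter (fun a => lp a = (q : ℕ)) with htailSdef
  set midS : Fin mhat → Finset ℕ :=
    fun q => G.filter (fun a => a ∈ AD (q : ℕ) ∧ fp a ≠ (q : ℕ) ∧ lp a ≠ (q : ℕ)) with hmidSdef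
  -- length bound for the local part
  have hLbound : ∀ q : Fin mhat,
      (Lq (q : ℕ)).length ≤ ExB (PermFam r (s + 1)) (locS q).card (mp q) := by
    intro q
    have hsubA : (Lq (q : ℕ)).Sublist (AD (q : ℕ)) := by
      rw [hLqdef]
      exact (List.filter_sublist).trans (List.filter_sublist)
    refine le_ExB (hfree.sublist (hsubA.trans (hADsubS _ q.2))) ?_ ?_
    · apply Finset.card_le_card
      intro a ha
      have ha' := List.mem_toFinset.1 ha
      rw [hmemL] at ha'
      rw [hlocSdef]
      simp only [Finset.mem_filter]
      exact ⟨List.mem_toFinset.2 (hAD_S a _ q.2 ha'.1), ha'.2.1, ha'.2.2⟩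
    · rw [hLqdef]
      simp only
      rw [List.filter_filter]
      exact hBP q _
  -- head occurrences: all symbols reappear strictly later
  have hHbound : ∀ q : Fin mhat,
      (Hq (q : ℕ)).length ≤ ExB (PermFam r s) (headS q).card (mp q) := by
    intro q
    have hsubA : (Hq (q : ℕ)).Sublist (AD (q : ℕ)) := by
      rw [hHqdef]
      exact (List.filter_sublist).trans (List.filter_sublist)
    have hocc : ∀ v ∈ Hq (q : ℕ), v ∈ ((ofnA.drop ((q : ℕ) + 1)).flatten) := by
      intro v hv
      rw [hmemH] at hv
      obtain ⟨hvA, hfpv, hlpv⟩ := hv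
      have h1 : (q : ℕ) ≤ lp v := hle_lp v _ hvA
      exact hpost_mem _ _ v (by omega) (hlp_lt v _ hvA) (hlp_mem v _ hvA)
    have hfreeH : FamFree (PermFam r s) (Hq (q : ℕ)) := by
      have hs' : s - 1 + 1 = s := by omega
      have := famFree_part_right (r := r) (k := s) (by omega)
        (Xpre := (ofnA.take (q : ℕ)).flatten) (A := AD (q : ℕ))
        (Xpost := (ofnA.drop ((q : ℕ) + 1)).flatten)
        (by rw [← hsplit _ q.2]; exact hfree) hsubA hocc
      exact this
    refine le_ExB hfreeH ?_ ?_
    · apply Finset.card_le_card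
      intro a ha
      have ha' := List.mem_toFinset.1 ha
      rw [hmemH] at ha'
      rw [hheadSdef]
      simp only [Finset.mem_filter, hGdef]
      refine ⟨⟨List.mem_toFinset.2 (hAD_S a _ q.2 ha'.1), ?_⟩, ha'.2.1⟩
      rw [ha'.2.1]
      exact fun h => ha'.2.2 h.symm
    · rw [hHqdef]
      simp only
      rw [List.filter_filter]
      exact hBP q _
  -- tail occurrences: all symbols appear strictly earlier
  have hTbound : ∀ q : Fin mhat,
      (Tq (q : ℕ)).length ≤ ExB (PermFam r s) (tailS q).card (mp q) := by
    intro q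
    have hsubA : (Tq (q : ℕ)).Sublist (AD (q : ℕ)) := by
      rw [hTqdef]
      exact (List.filter_sublist).trans (List.filter_sublist)
    have hocc : ∀ v ∈ Tq (q : ℕ), v ∈ ((ofnA.take (q : ℕ)).flatten) := by
      intro v hv
      rw [hmemT] at hv
      obtain ⟨hvA, hfpv, hlpv⟩ := hv
      have h1 : fp v ≤ (q : ℕ) := hfp_le v _ hvA
      exact hpre_mem _ _ v (by omega) q.2 (hfp_mem v _ hvA)
    have hfreeT : FamFree (PermFam r s) (Tq (q : ℕ)) := by
      have := famFree_part_left (r := r) (k := s) (by omega)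
        (Xpre := (ofnA.take (q : ℕ)).flatten) (A := AD (q : ℕ))
        (Xpost := (ofnA.drop ((q : ℕ) + 1)).flatten)
        (by rw [← hsplit _ q.2]; exact hfree) hsubA hocc
      exact this
    refine le_ExB hfreeT ?_ ?_
    · apply Finset.card_le_card
      intro a ha
      have ha' := List.mem_toFinset.1 ha
      rw [hmemT] at ha'
      rw [htailSdef]
      simp only [Finset.mem_filter, hGdef]
      refine ⟨⟨List.mem_toFinset.2 (hAD_S a _ q.2 ha'.1), ?_⟩, ha'.2.2⟩
      rw [ha'.2.2]
      exact fun h => ha'.2.1 h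
    · rw [hTqdef]
      simp only
      rw [List.filter_filter]
      exact hBP q _
  -- middle occurrences: symbols appear strictly earlier and strictly later
  have hMbound : ∀ q : Fin mhat,
      (Mq (q : ℕ)).length ≤ ExB (PermFam r (s - 1)) (midS q).card (mp q) := by
    intro q
    have hsubA : (Mq (q : ℕ)).Sublist (AD (q : ℕ)) := by
      rw [hMqdef]
      exact (List.filter_sublist).trans (List.filter_sublist)
    have hoccR : ∀ v ∈ Mq (q : ℕ), v ∈ ((ofnA.drop ((q : ℕ) + 1)).flatten) := by
      intro v hv
      rw [hmemM] at hv
      obtain ⟨hvA, hfpv, hlpv⟩ := hv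
      have h1 : (q : ℕ) ≤ lp v := hle_lp v _ hvA
      exact hpost_mem _ _ v (by omega) (hlp_lt v _ hvA) (hlp_mem v _ hvA)
    have hoccL : ∀ v ∈ Mq (q : ℕ), v ∈ ((ofnA.take (q : ℕ)).flatten) := by
      intro v hv
      rw [hmemM] at hv
      obtain ⟨hvA, hfpv, hlpv⟩ := hv
      have h1 : fp v ≤ (q : ℕ) := hfp_le v _ hvA
      exact hpre_mem _ _ v (by omega) q.2 (hfp_mem v _ hvA)
    have hfreeM : FamFree (PermFam r (s - 1)) (Mq (q : ℕ)) := by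
      have hs' : s - 1 + 2 = s + 1 := by omega
      have hfree' : FamFree (PermFam r (s - 1 + 2))
          ((ofnA.take (q : ℕ)).flatten ++
            (AD (q : ℕ) ++ (ofnA.drop ((q : ℕ) + 1)).flatten)) := by
        rw [hs', ← hsplit _ q.2]
        exact hfree
      exact famFree_part_both (r := r) (k := s - 1) (by omega) hfree' hsubA hoccL hoccR
    refine le_ExB hfreeM ?_ ?_
    · apply Finset.card_le_card
      intro a ha
      have ha' := List.mem_toFinset.1 ha
      rw [hmemM] at ha'
      rw [hmidSdef]
      simp only [Finset.mem_filter, hGdef]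
      have h1 : fp a ≤ (q : ℕ) := hfp_le a _ ha'.1
      have h2 : (q : ℕ) ≤ lp a := hle_lp a _ ha'.1
      refine ⟨⟨List.mem_toFinset.2 (hAD_S a _ q.2 ha'.1), by omega⟩, ha'.1, ha'.2.1, ha'.2.2⟩
    · rw [hMqdef]
      simp only
      rw [List.filter_filter]
      exact hBP q _
  -- the contracted sequence
  set K : Fin mhat → List ℕ :=
    fun q => keepLast ((AD (q : ℕ)).filter (fun a => decide (fp a ≠ lp a))) with hKdef
  set Shat : List ℕ := (List.ofFn K).flatten with hShatdef
  have hShatsub : Shat.Sublist S := by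
    rw [hShatdef, hSparts, hofnAdef]
    exact flatten_ofFn_sublist K _
      (fun q => (keepLast_sublist _).trans (List.filter_sublist))
  have hShatcard : Shat.toFinset.card ≤ G.card := by
    apply Finset.card_le_card
    intro v hv
    have hv' := List.mem_toFinset.1 hv
    rw [hShatdef] at hv'
    obtain ⟨l, hl, hvl⟩ := List.mem_flatten.1 hv'
    obtain ⟨q, rfl⟩ := List.mem_ofFn.1 hl
    have hvk := mem_keepLast.1 hvl
    rw [List.mem_filter] at hvk
    rw [hGdef]
    simp only [Finset.mem_filter]
    refine ⟨List.mem_toFinset.2 (hAD_S v _ q.2 hvk.1), by simpa using hvk.2⟩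
  have hShatbp : BlockPartition Shat mhat := by
    refine ⟨List.ofFn K, by rw [List.length_ofFn], ?_, hShatdef⟩
    intro B hB
    obtain ⟨q, rfl⟩ := List.mem_ofFn.1 hB
    exact keepLast_nodup _
  have hCbound : Shat.length ≤ ExB (PermFam r (s + 1)) G.card mhat :=
    le_ExB (hfree.sublist hShatsub) hShatcard hShatbp
  have hClen : Shat.length = ∑ q : Fin mhat, (G.filter (fun a => a ∈ AD (q : ℕ))).card := by
    rw [hShatdef, List.length_flatten, List.map_ofFn, List.sum_ofFn]
    apply Finset.sum_congr rfl
    intro q _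
    have h1 : (Function.comp List.length K) q = (K q).length := rfl
    rw [h1, hKdef]
    simp only
    rw [keepLast_length]
    congr 1
    ext a
    simp only [List.mem_toFinset, List.mem_filter, Finset.mem_filter, hGdef,
      decide_eq_true_eq]
    constructor
    · rintro ⟨h1, h2⟩
      exact ⟨⟨List.mem_toFinset.2 (hAD_S a _ q.2 h1), h2⟩, h1⟩
    · rintro ⟨⟨_, h2⟩, h1⟩
      exact ⟨h1, h2⟩
  -- counting sums
  have hexists_occ : ∀ a ∈ T0, ∃ j, j < mhat ∧ a ∈ AD j := by
    intro a ha
    have haS : a ∈ S := List.mem_toFinset.1 ha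
    rw [hSparts] at haS
    obtain ⟨l, hl, hal⟩ := List.mem_flatten.1 haS
    rw [hofnAdef] at hl
    obtain ⟨q, rfl⟩ := List.mem_ofFn.1 hl
    exact ⟨(q : ℕ), q.2, hal⟩
  have hHeadSum : ∑ q : Fin mhat, (headS q).card ≤ G.card := by
    rw [hheadSdef]
    rw [sum_card_filter_swap (G := G) (fun q a => fp a = (q : ℕ))]
    calc ∑ a ∈ G, (Finset.univ.filter (fun q : Fin mhat => fp a = (q : ℕ))).card
        ≤ ∑ _a ∈ G, 1 := by
          apply Finset.sum_le_sum
          intro a _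
          apply Finset.card_le_one.2
          intro q hq q' hq'
          rw [Finset.mem_filter] at hq hq'
          exact Fin.ext (hq.2 ▸ hq'.2.symm ▸ rfl)
      _ = G.card := by rw [Finset.sum_const, smul_eq_mul, mul_one]
  have hTailSum : ∑ q : Fin mhat, (tailS q).card ≤ G.card := by
    rw [htailSdef]
    rw [sum_card_filter_swap (G := G) (fun q a => lp a = (q : ℕ))]
    calc ∑ a ∈ G, (Finset.univ.filter (fun q : Fin mhat => lp a = (q : ℕ))).card
        ≤ ∑ _a ∈ G, 1 := by
          apply Finset.sum_le_sum
          intro a _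
          apply Finset.card_le_one.2
          intro q hq q' hq'
          rw [Finset.mem_filter] at hq hq'
          exact Fin.ext (hq.2 ▸ hq'.2.symm ▸ rfl)
      _ = G.card := by rw [Finset.sum_const, smul_eq_mul, mul_one]
  have hMidSum : (∑ q : Fin mhat, (midS q).card) + 2 * G.card ≤
      ∑ q : Fin mhat, (G.filter (fun a => a ∈ AD (q : ℕ))).card := by
    rw [hmidSdef]
    rw [sum_card_filter_swap (G := G)
      (fun q a => a ∈ AD (q : ℕ) ∧ fp a ≠ (q : ℕ) ∧ lp a ≠ (q : ℕ))]
    rw [sum_card_filter_swap (G := G) (fun q a => a ∈ AD (q : ℕ))]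
    have h2G : 2 * G.card = ∑ _a ∈ G, 2 := by
      rw [Finset.sum_const, smul_eq_mul]; ring
    rw [h2G, ← Finset.sum_add_distrib]
    apply Finset.sum_le_sum
    intro a haG
    have haT0 : a ∈ T0 := by
      rw [hGdef] at haG
      exact (Finset.mem_filter.1 haG).1
    have hafl : fp a ≠ lp a := by
      rw [hGdef] at haG
      exact (Finset.mem_filter.1 haG).2
    obtain ⟨j, hj, haj⟩ := hexists_occ a haT0
    have hfpa_lt : fp a < mhat := lt_of_le_of_lt (hfp_le a j haj) hj
    have hlpa_lt : lp a < mhat := hlp_lt a j haj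
    set Qa : Finset (Fin mhat) := Finset.univ.filter (fun q => a ∈ AD (q : ℕ)) with hQadef
    set fpF : Fin mhat := ⟨fp a, hfpa_lt⟩ with hfpF
    set lpF : Fin mhat := ⟨lp a, hlpa_lt⟩ with hlpF
    have hfpQ : fpF ∈ Qa := by
      rw [hQadef]
      exact Finset.mem_filter.2 ⟨Finset.mem_univ _, hfp_mem a j haj⟩
    have hlpQ : lpF ∈ Qa := by
      rw [hQadef]
      exact Finset.mem_filter.2 ⟨Finset.mem_univ _, hlp_mem a j haj⟩
    have hne : fpF ≠ lpF := by
      intro h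
      apply hafl
      have := congrArg Fin.val h
      exact this
    have hsubQ : Finset.univ.filter
        (fun q : Fin mhat => a ∈ AD (q : ℕ) ∧ fp a ≠ (q : ℕ) ∧ lp a ≠ (q : ℕ)) ⊆
        (Qa.erase fpF).erase lpF := by
      intro q hq
      rw [Finset.mem_filter] at hq
      obtain ⟨_, hmem, h1, h2⟩ := hq
      refine Finset.mem_erase.2 ⟨?_, Finset.mem_erase.2 ⟨?_, ?_⟩⟩
      · intro h; exact h2 (by rw [h])
      · intro h; exact h1 (by rw [h])
      · rw [hQadef]; exact Finset.mem_filter.2 ⟨Finset.mem_univ _, hmem⟩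
    have hc1 : ((Qa.erase fpF).erase lpF).card = Qa.card - 2 := by
      rw [Finset.card_erase_of_mem (Finset.mem_erase.2 ⟨hne.symm, hlpQ⟩),
        Finset.card_erase_of_mem hfpQ]
      omega
    have hc2 : 2 ≤ Qa.card := by
      have : ({fpF, lpF} : Finset (Fin mhat)) ⊆ Qa := by
        intro x hx
        rcases Finset.mem_insert.1 hx with rfl | hx
        · exact hfpQ
        · rw [Finset.mem_singleton.1 hx]; exact hlpQ
      have hp := Finset.card_le_card this
      rw [Finset.card_pair hne] at hp
      exact hp
    have := Finset.card_le_card hsubQ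
    omega
  have hLocSum : (∑ q : Fin mhat, (locS q).card) + G.card ≤ n := by
    rw [hlocSdef]
    rw [sum_card_filter_swap (G := T0) (fun q a => fp a = (q : ℕ) ∧ lp a = (q : ℕ))]
    have hG2 : G.card = ∑ a ∈ T0, if fp a ≠ lp a then 1 else 0 := by
      rw [hGdef, Finset.card_filter]
    rw [hG2, ← Finset.sum_add_distrib]
    calc ∑ a ∈ T0,
          ((Finset.univ.filter (fun q : Fin mhat => fp a = (q : ℕ) ∧ lp a = (q : ℕ))).card
            + if fp a ≠ lp a then 1 else 0)
        ≤ ∑ _a ∈ T0, 1 := by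
          apply Finset.sum_le_sum
          intro a _
          by_cases hfl : fp a = lp a
          · have hite : (if fp a ≠ lp a then 1 else 0) = 0 := by simp [hfl]
            have : (Finset.univ.filter
                (fun q : Fin mhat => fp a = (q : ℕ) ∧ lp a = (q : ℕ))).card ≤ 1 := by
              apply Finset.card_le_one.2
              intro q hq q' hq'
              rw [Finset.mem_filter] at hq hq'
              exact Fin.ext (hq.2.1 ▸ hq'.2.1.symm ▸ rfl)
            rw [hite]
            omega
          · have : (Finset.univ.filter
                (fun q : Fin mhat => fp a = (q : ℕ) ∧ lp a = (q : ℕ))).card = 0 := by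
              rw [Finset.card_eq_zero]
              apply Finset.filter_eq_empty_iff.2
              intro q _
              intro hcon
              exact hfl (hcon.1.trans hcon.2.symm)
            simp [this, hfl]
      _ = T0.card := by rw [Finset.sum_const, smul_eq_mul, mul_one]
      _ ≤ n := hcard
  have hSlen : S.length = ∑ q : Fin mhat, (AD (q : ℕ)).length := by
    rw [hSparts, List.length_flatten, hofnAdef, List.map_ofFn, List.sum_ofFn]
    rfl
  -- choice of alphabet partition
  set z : Fin mhat := ⟨0, by omega⟩ with hzdef
  set np : Fin mhat → ℕ := fun q => (locS q).card +
    (if q = z then n - (G.card + ∑ q' : Fin mhat, (locS q').card) else 0) with hnpdef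
  have hnp_ge : ∀ q : Fin mhat, (locS q).card ≤ np q := by
    intro q
    rw [hnpdef]
    exact Nat.le_add_right _ _
  have hnp_sum : G.card + ∑ q : Fin mhat, np q = n := by
    rw [hnpdef]
    rw [Finset.sum_add_distrib]
    rw [Finset.sum_ite_eq' Finset.univ z
      (fun _ => n - (G.card + ∑ q' : Fin mhat, (locS q').card))]
    simp only [Finset.mem_univ, if_true]
    omega
  -- local parts bound
  have hLtot : ∑ q : Fin mhat, (Lq (q : ℕ)).length ≤
      ∑ q : Fin mhat, ExB (PermFam r (s + 1)) (np q) (mp q) := by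
    apply Finset.sum_le_sum
    intro q _
    exact (hLbound q).trans (ExB_mono hnilP (hnp_ge q) le_rfl)
  have es1 : s - 1 + 1 = s := by omega
  have es2 : s - 2 + 1 = s - 1 := by omega
  refine ⟨G.card, np, hnp_sum, ?_, ?_⟩
  · -- the case mhat = 2
    intro h2
    subst h2
    have hm2 : mp 0 + mp 1 = m := by rw [← hmpsum, Fin.sum_univ_two]
    have hz0 : ((0 : Fin 2) : ℕ) = 0 := rfl
    have hz1 : ((1 : Fin 2) : ℕ) = 1 := rfl
    -- emptiness of the degenerate classes
    have hH1 : (Hq 1).length = 0 := by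
      rw [List.length_eq_zero_iff]
      rw [List.eq_nil_iff_forall_not_mem]
      intro a ha
      rw [hmemH] at ha
      have h1 : 1 ≤ lp a := hle_lp a 1 ha.1
      have h2 : lp a < 2 := hlp_lt a 1 ha.1
      exact ha.2.2 (by omega)
    have hT0 : (Tq 0).length = 0 := by
      rw [List.length_eq_zero_iff]
      rw [List.eq_nil_iff_forall_not_mem]
      intro a ha
      rw [hmemT] at ha
      have h1 : fp a ≤ 0 := hfp_le a 0 ha.1
      exact ha.2.1 (by omega)
    have hM0 : (Mq 0).length = 0 := by
      rw [List.length_eq_zero_iff]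
      rw [List.eq_nil_iff_forall_not_mem]
      intro a ha
      rw [hmemM] at ha
      have h1 : fp a ≤ 0 := hfp_le a 0 ha.1
      exact ha.2.1 (by omega)
    have hM1 : (Mq 1).length = 0 := by
      rw [List.length_eq_zero_iff]
      rw [List.eq_nil_iff_forall_not_mem]
      intro a ha
      rw [hmemM] at ha
      have h1 : 1 ≤ lp a := hle_lp a 1 ha.1
      have h2 : lp a < 2 := hlp_lt a 1 ha.1
      exact ha.2.2 (by omega)
    -- assemble
    have hS2 : S.length = (AD 0).length + (AD 1).length := by
      rw [hSlen, Fin.sum_univ_two, hz0, hz1]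
    have hglob : (Hq 0).length + (Tq 1).length ≤
        ExB (PermFam r s) (2 * G.card) m := by
      have hH0 := hHbound 0
      have hT1 := hTbound 1
      rw [hz0] at hH0
      rw [hz1] at hT1
      have hsup := ExB_superadd (r := r) (k := s) hr1 (by omega)
        (headS 0).card (mp 0) (tailS 1).card (mp 1)
      have hmono : ExB (PermFam r s) ((headS 0).card + (tailS 1).card) (mp 0 + mp 1) ≤
          ExB (PermFam r s) (2 * G.card) m := by
        apply ExB_mono hnil1 ?_ (le_of_eq hm2)
        have hh : (headS 0).card ≤ G.card := by
          rw [hheadSdef]; exact Finset.card_filter_le _ _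
        have ht : (tailS 1).card ≤ G.card := by
          rw [htailSdef]; exact Finset.card_filter_le _ _
        omega
      omega
    have hA0 := hlen4 0
    have hA1 := hlen4 1
    have hL0 := hLbound 0
    have hL1 := hLbound 1
    rw [hz0] at hL0
    rw [hz1] at hL1
    have hL0' : (Lq 0).length ≤ ExB (PermFam r (s + 1)) (np 0) (mp 0) :=
      hL0.trans (ExB_mono hnilP (hnp_ge 0) le_rfl)
    have hL1' : (Lq 1).length ≤ ExB (PermFam r (s + 1)) (np 1) (mp 1) :=
      hL1.trans (ExB_mono hnilP (hnp_ge 1) le_rfl)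
    simp only [PERMB, es1]
    rw [← hlen, Fin.sum_univ_two]
    omega
  · -- the case 2 < mhat
    intro hgt
    have hHtot : ∑ q : Fin mhat, (Hq (q : ℕ)).length ≤ ExB (PermFam r s) G.card m := by
      calc ∑ q : Fin mhat, (Hq (q : ℕ)).length
          ≤ ∑ q : Fin mhat, ExB (PermFam r s) (headS q).card (mp q) :=
            Finset.sum_le_sum fun q _ => hHbound q
        _ ≤ ExB (PermFam r s) (∑ q : Fin mhat, (headS q).card) (∑ q : Fin mhat, mp q) :=
            ExB_superadd_sum hr1 (by omega) _ _
        _ ≤ ExB (PermFam r s) G.card m := ExB_mono hnil1 hHeadSum (le_of_eq hmpsum)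
    have hTtot : ∑ q : Fin mhat, (Tq (q : ℕ)).length ≤ ExB (PermFam r s) G.card m := by
      calc ∑ q : Fin mhat, (Tq (q : ℕ)).length
          ≤ ∑ q : Fin mhat, ExB (PermFam r s) (tailS q).card (mp q) :=
            Finset.sum_le_sum fun q _ => hTbound q
        _ ≤ ExB (PermFam r s) (∑ q : Fin mhat, (tailS q).card) (∑ q : Fin mhat, mp q) :=
            ExB_superadd_sum hr1 (by omega) _ _
        _ ≤ ExB (PermFam r s) G.card m := ExB_mono hnil1 hTailSum (le_of_eq hmpsum)
    have hMtot : ∑ q : Fin mhat, (Mq (q : ℕ)).length ≤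
        ExB (PermFam r (s - 1)) (ExB (PermFam r (s + 1)) G.card mhat - 2 * G.card) m := by
      calc ∑ q : Fin mhat, (Mq (q : ℕ)).length
          ≤ ∑ q : Fin mhat, ExB (PermFam r (s - 1)) (midS q).card (mp q) :=
            Finset.sum_le_sum fun q _ => hMbound q
        _ ≤ ExB (PermFam r (s - 1)) (∑ q : Fin mhat, (midS q).card) (∑ q : Fin mhat, mp q) :=
            ExB_superadd_sum hr1 (by omega) _ _
        _ ≤ ExB (PermFam r (s - 1))
              (ExB (PermFam r (s + 1)) G.card mhat - 2 * G.card) m := by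
            apply ExB_mono hnil2 ?_ (le_of_eq hmpsum)
            have h1 := hMidSum
            have h2 := hCbound
            rw [hClen] at h2
            omega
    have hsplit4 : ∑ q : Fin mhat, (AD (q : ℕ)).length =
        ∑ q : Fin mhat, (Lq (q : ℕ)).length + ∑ q : Fin mhat, (Hq (q : ℕ)).length +
          (∑ q : Fin mhat, (Tq (q : ℕ)).length + ∑ q : Fin mhat, (Mq (q : ℕ)).length) := by
      have h1 : ∑ q : Fin mhat, (AD (q : ℕ)).length =
          ∑ q : Fin mhat, ((Lq (q : ℕ)).length + (Hq (q : ℕ)).length +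
            ((Tq (q : ℕ)).length + (Mq (q : ℕ)).length)) :=
        Finset.sum_congr rfl fun q _ => hlen4 (q : ℕ)
      rw [h1, Finset.sum_add_distrib, Finset.sum_add_distrib, Finset.sum_add_distrib]
    simp only [PERMB, es1, es2]
    rw [← hlen]
    omega
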